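/- arXiv:1411.6578 — 2 statements merged into one kernel-verified Lean document; each statement's English description precedes it below -/
import Mathlib

section
/- If ρ(m) = 2^{−m} (the Dirichlet-process case), the expected KL divergence E_M = Σ_{m=1}^M {ψ₀(2α/2^m) − ψ₀(α/2^m) − log 2} diverges to +∞ as M → ∞, for every α > 0. -/
open scoped BigOperators
open Filter

/-- The digamma function `ψ₀ = (log ∘ Γ)'`. -/
noncomputable def digamma (x : ℝ) : ℝ := deriv (fun y => Real.log (Real.Gamma y)) x

private lemma digamma_diff {x : ℝ} (hx : 0 < x) :
    DifferentiableAt ℝ (fun y => Real.log (Real.Gamma y)) x := by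
  refine ((Real.differentiableAt_Gamma ?_).log (Real.Gamma_ne_zero ?_)) <;>
    exact fun m => ((neg_nonpos.mpr (Nat.cast_nonneg m)).trans_lt hx).ne'

private lemma digamma_rec {x : ℝ} (hx : 0 < x) :
    digamma (x + 1) = digamma x + 1 / x := by
  unfold digamma
  rw [← deriv_comp_add_const, one_div, ← Real.deriv_log,
    ← deriv_fun_add (digamma_diff hx) (Real.differentiableAt_log hx.ne')]
  apply Filter.EventuallyEq.deriv_eq
  filter_upwards [eventually_gt_nhds hx] with y hy
  rw [Real.Gamma_add_one hy.ne', Real.log_mul hy.ne'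
    (Real.Gamma_pos_of_pos hy).ne', add_comm]

private lemma digamma_mono : MonotoneOn digamma (Set.Ioi (0:ℝ)) := by
  have := Real.convexOn_log_Gamma.monotoneOn_deriv
    (fun x hx => digamma_diff (Set.mem_Ioi.mp hx))
  exact this

/-- In the Dirichlet-process case `ρ(m) = 2^{−m}`, the expected KL
divergence `E_M = ∑_{m=1}^M {ψ₀(2α/2^m) − ψ₀(α/2^m) − log 2}` diverges to `+∞`
as `M → ∞`, for every `α > 0`. -/
theorem polyaTree_expected_kl_dirichlet_diverges (α : ℝ) (hα : 0 < α) :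
    Tendsto (fun M : ℕ => ∑ m ∈ Finset.Icc 1 M,
      (digamma (2 * (α / 2 ^ m)) - digamma (α / 2 ^ m) - Real.log 2))
      atTop atTop := by
  -- telescoping form
  have key : ∀ M : ℕ, (∑ m ∈ Finset.Icc 1 M,
      (digamma (2 * (α / 2 ^ m)) - digamma (α / 2 ^ m) - Real.log 2))
      = digamma α - digamma (α / 2 ^ M) - M * Real.log 2 := by
    intro M
    have h2 : (∑ m ∈ Finset.Icc 1 M, (digamma (2 * (α / 2 ^ m)) - digamma (α / 2 ^ m)))
        = digamma α - digamma (α / 2 ^ M) := by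
      rw [← Finset.Ico_add_one_right_eq_Icc, Finset.sum_Ico_eq_sum_range]
      have : (∑ i ∈ Finset.range (M + 1 - 1),
          (digamma (2 * (α / 2 ^ (1 + i))) - digamma (α / 2 ^ (1 + i))))
          = ∑ i ∈ Finset.range M,
          ((fun j => digamma (α / 2 ^ j)) i - (fun j => digamma (α / 2 ^ j)) (i + 1)) := by
        simp only [Nat.add_sub_cancel]
        refine Finset.sum_congr rfl (fun i _ => ?_)
        have hp : 2 * (α / 2 ^ (1 + i)) = α / 2 ^ i := by
          rw [pow_add, pow_one]
          field_simp
        rw [hp, add_comm 1 i]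
      rw [this, Finset.sum_range_sub']
      simp
    have h1 : ∀ m ∈ Finset.Icc 1 M,
        digamma (2 * (α / 2 ^ m)) - digamma (α / 2 ^ m) - Real.log 2
        = (digamma (2 * (α / 2 ^ m)) - digamma (α / 2 ^ m)) - Real.log 2 := fun m _ => rfl
    rw [Finset.sum_congr rfl h1, Finset.sum_sub_distrib, Finset.sum_const,
      Nat.card_Icc, nsmul_eq_mul, h2]
    push_cast
    ring
  -- lower bound function
  have hbound : ∀ M : ℕ,
      digamma α - digamma (1 + α) + (2:ℝ) ^ M / α - M * Real.log 2
      ≤ digamma α - digamma (α / 2 ^ M) - M * Real.log 2 := by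
    intro M
    have hx : 0 < α / 2 ^ M := by positivity
    have hrec := digamma_rec hx
    have hle : α / 2 ^ M ≤ α :=
      div_le_self hα.le (by exact_mod_cast Nat.one_le_two_pow (n := M))
    have hmono := digamma_mono (Set.mem_Ioi.mpr (by positivity : (0:ℝ) < α / 2 ^ M + 1))
      (Set.mem_Ioi.mpr (by positivity : (0:ℝ) < 1 + α)) (by linarith)
    have h1x : 1 / (α / 2 ^ M) = 2 ^ M / α := one_div_div _ _
    have : digamma (α / 2 ^ M) ≤ digamma (1 + α) - 2 ^ M / α := by
      have heq : digamma (α / 2 ^ M) = digamma (α / 2 ^ M + 1) - 2 ^ M / α := by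
        rw [hrec, h1x]; ring
      rw [heq]
      linarith
    linarith
  refine tendsto_atTop_mono (fun M => (key M).symm ▸ hbound M) ?_
  have h2 : Tendsto (fun M : ℕ => (2:ℝ) ^ M / α - M * Real.log 2) atTop atTop := by
    have heq : ∀ M : ℕ, (2:ℝ) ^ M / α - M * Real.log 2
        = (2:ℝ) ^ M * (1 / α - (M / 2 ^ M) * Real.log 2) := by
      intro M
      have h2M : (2:ℝ) ^ M ≠ 0 := by positivity
      field_simp
    rw [funext heq]
    refine Filter.Tendsto.atTop_mul_pos (C := 1 / α) (by positivity)
      (tendsto_pow_atTop_atTop_of_one_lt (by norm_num)) ?_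
    have hmul : Tendsto (fun M : ℕ => ((M:ℝ) / 2 ^ M) * Real.log 2) atTop (nhds 0) := by
      have h0 := tendsto_pow_const_div_const_pow_of_one_lt 1 (by norm_num : (1:ℝ) < 2)
      simp only [pow_one] at h0
      simpa using h0.mul_const (Real.log 2)
    simpa using tendsto_const_nhds.sub hmul
  have h3 := tendsto_atTop_add_const_left atTop (digamma α - digamma (1 + α)) h2
  exact h3.congr (fun M => by ring)
end

section
/- In the frequentist bootstrap case p_i = 1/n, the bound E[KL(w||p)] ≤ log(2 − 1/n) ≤ log 2 holds, where n·w ~ Multinomial(n, (1/n,...,1/n)). -/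
open scoped BigOperators

lemma binom_sum (m : ℕ) (p q : ℝ) (h : p + q = 1) :
    ∑ k ∈ Finset.range (m+1), (m.choose k : ℝ) * p^k * q^(m-k) = 1 := by
  have hb := add_pow p q m
  rw [h, one_pow] at hb
  rw [hb]
  exact Finset.sum_congr rfl fun k _ => by ring

lemma binom_mean (m : ℕ) (p q : ℝ) (h : p + q = 1) :
    ∑ k ∈ Finset.range (m+1), (m.choose k : ℝ) * p^k * q^(m-k) * k = m * p := by
  cases m with
  | zero => simp
  | succ m' =>
    rw [Finset.sum_range_succ']
    simp only [Nat.cast_zero, mul_zero, add_zero]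
    have key : ∀ j ∈ Finset.range (m'+1),
        (((m'+1).choose (j+1) : ℝ) * p^(j+1) * q^(m'+1-(j+1)) * ((j+1 : ℕ) : ℝ))
          = (((m'+1):ℝ) * p) * ((m'.choose j : ℝ) * p^j * q^(m'-j)) := by
      intro j hj
      have hc : (((m'+1).choose (j+1) : ℝ)) * ((j:ℝ)+1) = ((m'+1):ℝ) * (m'.choose j : ℝ) := by
        have h1 : (m'+1) * m'.choose j = (m'+1).choose (j+1) * (j+1) := by
          simpa [Nat.succ_eq_add_one] using Nat.add_one_mul_choose_eq m' j
        exact_mod_cast (congrArg (Nat.cast (R := ℝ)) h1).symm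
      have hq : m' + 1 - (j+1) = m' - j := by omega
      rw [hq, pow_succ]
      push_cast
      linear_combination (p^j * p * q^(m'-j)) * hc
    rw [Finset.sum_congr rfl key, ← Finset.mul_sum, binom_sum m' p q h]
    push_cast
    ring


/-- In the frequentist bootstrap case `p_i = 1/n` with
`n·w ~ Multinomial(n, (1/n,...,1/n))` (so each `w_i = V_i/n`, `V_i ~ Binomial(n, 1/n)`
marginally), the bound `E[KL(w||p)] ≤ log(2 − 1/n) ≤ log 2` holds, where
`KL(w||p) = ∑_i w_i log (n w_i)` (with `0 log 0 := 0`, automatic since `Real.log 0 = 0`).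
The expectation is written as the explicit binomial sum. -/
theorem bootstrap_expected_reverse_kl_bound (n : ℕ) (hn : 1 ≤ n) :
    (∑ _i : Fin n, ∑ k ∈ Finset.range (n + 1),
        (n.choose k : ℝ) * (1 / n) ^ k * (1 - 1 / n) ^ (n - k)
          * (((k : ℝ) / n) * Real.log ((n : ℝ) * ((k : ℝ) / n))) ≤
      Real.log (2 - 1 / n)) ∧
    Real.log (2 - 1 / (n : ℝ)) ≤ Real.log 2 := by
  obtain ⟨m, rfl⟩ : ∃ m, n = m + 1 := ⟨n - 1, by omega⟩
  set N : ℝ := ((m + 1 : ℕ) : ℝ) with hN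
  have hNpos : (0:ℝ) < N := by positivity
  have hN0 : N ≠ 0 := ne_of_gt hNpos
  have hN1 : (1:ℝ) ≤ N := by
    rw [hN]; exact_mod_cast Nat.succ_le_succ (Nat.zero_le m)
  set p : ℝ := 1 / N with hp
  set q : ℝ := 1 - 1 / N with hq
  have hpq : p + q = 1 := by rw [hp, hq]; ring
  have hp0 : 0 ≤ p := by positivity
  have hq0 : 0 ≤ q := by
    rw [hq]
    have : 1 / N ≤ 1 := by
      rw [div_le_one hNpos]; exact hN1
    linarith
  have hp1 : N * p = 1 := by rw [hp]; field_simp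
  constructor
  · -- main bound
    -- Step B: sum over Fin n is n copies
    rw [Finset.sum_const, Finset.card_univ, Fintype.card_fin, nsmul_eq_mul, Finset.mul_sum]
    -- Step A+C: rewrite each term
    have step : ∀ k ∈ Finset.range (m + 1 + 1),
        N * ((( (m+1).choose k : ℝ)) * p ^ k * q ^ (m + 1 - k)
          * (((k : ℝ) / N) * Real.log (N * ((k : ℝ) / N))))
        = ((m+1).choose k : ℝ) * p ^ k * q ^ (m + 1 - k) * ((k:ℝ) * Real.log k) := by
      intro k _
      have hnk : N * ((k:ℝ) / N) = (k:ℝ) := by field_simp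
      rw [hnk]
      field_simp
    rw [Finset.sum_congr rfl step, Finset.sum_range_succ']
    simp only [Nat.cast_zero, Real.log_zero, mul_zero, zero_mul, add_zero]
    have step2 : ∀ j ∈ Finset.range (m + 1),
        (((m+1).choose (j+1) : ℝ)) * p ^ (j+1) * q ^ (m + 1 - (j+1))
          * (((j+1 : ℕ):ℝ) * Real.log ((j+1 : ℕ):ℝ))
        = ((m.choose j : ℝ) * p ^ j * q ^ (m - j)) * Real.log ((j:ℝ)+1) := by
      intro j _
      have hc : (((m+1).choose (j+1) : ℝ)) * ((j:ℝ)+1) = N * (m.choose j : ℝ) := by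
        have h1 : (m+1) * m.choose j = (m+1).choose (j+1) * (j+1) := by
          simpa [Nat.succ_eq_add_one] using Nat.add_one_mul_choose_eq m j
        rw [hN]
        exact_mod_cast (congrArg (Nat.cast (R := ℝ)) h1).symm
      have hq2 : m + 1 - (j+1) = m - j := by omega
      rw [hq2, pow_succ]
      push_cast
      linear_combination (p^j * p * q^(m-j) * Real.log ((j:ℝ)+1)) * hc
        + ((m.choose j : ℝ) * p^j * q^(m-j) * Real.log ((j:ℝ)+1)) * hp1
    rw [Finset.sum_congr rfl step2]
    -- Jensen
    have hcOn : ConcaveOn ℝ (Set.Ioi (0:ℝ)) Real.log := strictConcaveOn_log_Ioi.concaveOn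
    have h0 : ∀ j ∈ Finset.range (m+1), 0 ≤ (m.choose j : ℝ) * p ^ j * q ^ (m - j) := by
      intro j _
      have : (0:ℝ) ≤ (m.choose j : ℝ) := by positivity
      exact mul_nonneg (mul_nonneg this (pow_nonneg hp0 j)) (pow_nonneg hq0 _)
    have h1 : ∑ j ∈ Finset.range (m+1), (m.choose j : ℝ) * p ^ j * q ^ (m - j) = 1 :=
      binom_sum m p q hpq
    have hmem : ∀ j ∈ Finset.range (m+1), ((j:ℝ)+1) ∈ Set.Ioi (0:ℝ) := by
      intro j _; simp only [Set.mem_Ioi]; positivity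
    have jensen := hcOn.le_map_sum (t := Finset.range (m+1))
      (w := fun j => (m.choose j : ℝ) * p ^ j * q ^ (m - j))
      (p := fun j => (j:ℝ)+1) h0 h1 hmem
    simp only [smul_eq_mul] at jensen
    have hmean : ∑ j ∈ Finset.range (m+1),
        ((m.choose j : ℝ) * p ^ j * q ^ (m - j)) * ((j:ℝ)+1) = 2 - 1 / N := by
      have expand : ∀ j ∈ Finset.range (m+1),
          ((m.choose j : ℝ) * p ^ j * q ^ (m - j)) * ((j:ℝ)+1)
          = ((m.choose j : ℝ) * p ^ j * q ^ (m - j)) * (j:ℝ)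
            + ((m.choose j : ℝ) * p ^ j * q ^ (m - j)) := fun j _ => by ring
      rw [Finset.sum_congr rfl expand, Finset.sum_add_distrib, binom_mean m p q hpq, h1, hp]
      rw [hN]
      push_cast
      field_simp
      ring
    rw [hmean] at jensen
    convert jensen using 3 <;> push_cast <;> ring
  · apply Real.log_le_log
    · have : 1 / N ≤ 1 := by rw [div_le_one hNpos]; exact hN1
      push_cast
      linarith
    · have : 0 ≤ 1 / N := by positivity
      push_cast
      linarith
end
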